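/- For every n ≥ 1, the number of decorated n-connectors whose underlying partition has at least one horizontal block is |T_n^=| = 2^{n−1}·((2n−1)!! − n!). (Lemma 4.3 of the paper.) -/

import Mathlib

open Finset Equiv

abbrev FPF (α : Type) := {σ : Equiv.Perm α // (∀ x, σ (σ x) = x) ∧ (∀ x, σ x ≠ x)}

lemma fpf_iff {α : Type} (σ : Equiv.Perm α) (hinv : ∀ x, σ (σ x) = x) (a : α) :
    ∀ x, (x ≠ a ∧ x ≠ σ a) ↔ (σ x ≠ a ∧ σ x ≠ σ a) := by
  intro x
  have h1 : σ x = a ↔ x = σ a := ⟨fun e => by rw [← e, hinv], fun e => by rw [e, hinv]⟩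
  have h2 : σ x = σ a ↔ x = a := σ.apply_eq_iff_eq
  rw [Ne, Ne, Ne, Ne, h1, h2, and_comm]

/-- The restriction of an fpf involution to the complement of the block of `a`. -/
def fpfRestrict {α : Type} [DecidableEq α] (σ : FPF α) (a : α) :
    FPF {x : α // x ≠ a ∧ x ≠ σ.1 a} := by
  refine ⟨σ.1.subtypePerm (fun x => (fpf_iff σ.1 σ.2.1 a x).symm), fun x => ?_, fun x => ?_⟩
  · apply Subtype.ext
    simp [Equiv.Perm.subtypePerm_apply, σ.2.1]
  · simp only [Ne, Subtype.ext_iff, Equiv.Perm.subtypePerm_apply]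
    exact σ.2.2 x.1

/-- Gluing: from `b ≠ a` and an fpf involution of the complement of `{a, b}`,
an fpf involution of `α`. -/
def fpfGlueAux {α : Type} [DecidableEq α] (a b : α) (hb : b ≠ a)
    (τ : FPF {x : α // x ≠ a ∧ x ≠ b}) : FPF α := by
  refine ⟨Equiv.swap a b * Equiv.Perm.ofSubtype τ.1, fun x => ?_, fun x => ?_⟩
  all_goals obtain ⟨τ, hτi, hτf⟩ := τ
  all_goals
    have hfa : Equiv.Perm.ofSubtype τ a = a :=
      Equiv.Perm.ofSubtype_apply_of_not_mem τ (by simp)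
    have hfb : Equiv.Perm.ofSubtype τ b = b :=
      Equiv.Perm.ofSubtype_apply_of_not_mem τ (by simp)
  · by_cases hxa : x = a
    · subst hxa
      simp [hfa, hfb, Equiv.swap_apply_left, Equiv.swap_apply_right, hb, Ne.symm hb]
    · by_cases hxb : x = b
      · subst hxb
        simp [hfa, hfb, Equiv.swap_apply_left, Equiv.swap_apply_right, hb, Ne.symm hb]
      · have hx : x ≠ a ∧ x ≠ b := ⟨hxa, hxb⟩
        have e1 : Equiv.Perm.ofSubtype τ x = (τ ⟨x, hx⟩).1 :=
          Equiv.Perm.ofSubtype_apply_of_mem τ hx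
        have hτx := (τ ⟨x, hx⟩).2
        have e2 : Equiv.swap a b ((τ ⟨x, hx⟩).1) = (τ ⟨x, hx⟩).1 :=
          Equiv.swap_apply_of_ne_of_ne hτx.1 hτx.2
        have e3 : Equiv.Perm.ofSubtype τ ((τ ⟨x, hx⟩).1) = (τ (τ ⟨x, hx⟩)).1 :=
          Equiv.Perm.ofSubtype_apply_of_mem τ (τ ⟨x, hx⟩).2
        simp only [Equiv.Perm.mul_apply, e1, e2, e3, hτi]
        exact Equiv.swap_apply_of_ne_of_ne hx.1 hx.2
  · by_cases hxa : x = a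
    · subst hxa
      simp [hfa, Equiv.swap_apply_left, hb, Ne.symm hb]
    · by_cases hxb : x = b
      · subst hxb
        simp [hfb, Equiv.swap_apply_right, hb, Ne.symm hb]
      · have hx : x ≠ a ∧ x ≠ b := ⟨hxa, hxb⟩
        have e1 : Equiv.Perm.ofSubtype τ x = (τ ⟨x, hx⟩).1 :=
          Equiv.Perm.ofSubtype_apply_of_mem τ hx
        have hτx := (τ ⟨x, hx⟩).2
        have e2 : Equiv.swap a b ((τ ⟨x, hx⟩).1) = (τ ⟨x, hx⟩).1 :=
          Equiv.swap_apply_of_ne_of_ne hτx.1 hτx.2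
        simp only [Equiv.Perm.mul_apply, e1, e2]
        intro e
        exact hτf ⟨x, hx⟩ (Subtype.ext e)

def fpfGlue {α : Type} [DecidableEq α] (a : α) (bτ : Σ b : {b : α // b ≠ a},
    FPF {x : α // x ≠ a ∧ x ≠ b.1}) : FPF α :=
  fpfGlueAux a bτ.1.1 bτ.1.2 bτ.2

@[simp] lemma fpfGlue_val {α : Type} [DecidableEq α] (a : α) (bτ : Σ b : {b : α // b ≠ a},
    FPF {x : α // x ≠ a ∧ x ≠ b.1}) :
    (fpfGlue a bτ).1 = Equiv.swap a bτ.1.1 * Equiv.Perm.ofSubtype bτ.2.1 := rfl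

lemma fpfGlue_injective {α : Type} [DecidableEq α] (a : α) :
    Function.Injective (fpfGlue (α := α) a) := by
  rintro ⟨⟨b, hb⟩, τ, hτ⟩ ⟨⟨b', hb'⟩, τ', hτ'⟩ h
  have h' : Equiv.swap a b * Equiv.Perm.ofSubtype τ
      = Equiv.swap a b' * Equiv.Perm.ofSubtype τ' := congrArg Subtype.val h
  have ea : (Equiv.swap a b * Equiv.Perm.ofSubtype τ) a = b := by
    rw [Equiv.Perm.mul_apply, Equiv.Perm.ofSubtype_apply_of_not_mem τ (by simp),
      Equiv.swap_apply_left]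
  have ea' : (Equiv.swap a b' * Equiv.Perm.ofSubtype τ') a = b' := by
    rw [Equiv.Perm.mul_apply, Equiv.Perm.ofSubtype_apply_of_not_mem τ' (by simp),
      Equiv.swap_apply_left]
  rw [h'] at ea
  rw [ea'] at ea
  obtain rfl : b = b' := ea.symm
  have hττ : τ = τ' := by
    have h2 : Equiv.Perm.ofSubtype τ = Equiv.Perm.ofSubtype τ' := mul_left_cancel h'
    ext x
    have := congrFun (congrArg DFunLike.coe h2) x.1
    rwa [Equiv.Perm.ofSubtype_apply_coe, Equiv.Perm.ofSubtype_apply_coe] at this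
  exact Sigma.ext rfl (heq_of_eq (Subtype.ext hττ))

lemma fpfGlue_surjective {α : Type} [DecidableEq α] (a : α) :
    Function.Surjective (fpfGlue (α := α) a) := by
  intro σ
  refine ⟨⟨⟨σ.1 a, σ.2.2 a⟩, fpfRestrict σ a⟩, ?_⟩
  apply Subtype.ext
  rw [fpfGlue_val]
  ext x
  rw [Equiv.Perm.mul_apply]
  by_cases hxa : x = a
  · subst hxa
    rw [Equiv.Perm.ofSubtype_apply_of_not_mem _ (by simp), Equiv.swap_apply_left]
  · by_cases hxb : x = σ.1 a
    · subst hxb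
      rw [Equiv.Perm.ofSubtype_apply_of_not_mem _ (by simp), Equiv.swap_apply_right]
      exact (σ.2.1 a).symm
    · have hx : x ≠ a ∧ x ≠ σ.1 a := ⟨hxa, hxb⟩
      rw [Equiv.Perm.ofSubtype_apply_of_mem (p := fun y => y ≠ a ∧ y ≠ σ.1 a) _ hx]
      have hσx : σ.1 x ≠ a ∧ σ.1 x ≠ σ.1 a := (fpf_iff σ.1 σ.2.1 a x).mp hx
      exact Equiv.swap_apply_of_ne_of_ne hσx.1 hσx.2

lemma card_fpf : ∀ (n : ℕ) (α : Type) [Fintype α] [DecidableEq α], Fintype.card α = 2 * n →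
    Fintype.card (FPF α) = Nat.doubleFactorial (2 * n - 1) := by
  intro n
  induction n with
  | zero =>
    intro α _ _ h
    haveI : IsEmpty α := Fintype.card_eq_zero_iff.mp (by simpa using h)
    rw [show Nat.doubleFactorial (2 * 0 - 1) = 1 from rfl, Fintype.card_eq_one_iff]
    exact ⟨⟨1, fun x => (IsEmpty.elim inferInstance x), fun x => (IsEmpty.elim inferInstance x)⟩,
      fun σ => Subtype.ext (Equiv.ext fun x => (IsEmpty.elim inferInstance x))⟩
  | succ n ih =>
    intro α _ _ h
    have hpos : 0 < Fintype.card α := by omega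
    obtain ⟨a⟩ := Fintype.card_pos_iff.mp hpos
    have key := Fintype.card_congr
      (Equiv.ofBijective _ ⟨fpfGlue_injective a, fpfGlue_surjective a⟩)
    rw [← key, Fintype.card_sigma]
    have hb : ∀ b : {b : α // b ≠ a}, Fintype.card (FPF {x : α // x ≠ a ∧ x ≠ b.1}) =
        Nat.doubleFactorial (2 * n - 1) := by
      intro b
      refine ih _ ?_
      have : Fintype.card {x : α // x ≠ a ∧ x ≠ b.1} = Fintype.card α - 2 := by
        rw [Fintype.card_subtype]
        have : (univ.filter fun x : α => x ≠ a ∧ x ≠ b.1) = univ \ {a, b.1} := by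
          ext x; simp [and_comm]
        rw [this, Finset.card_sdiff_of_subset (by simp), Finset.card_univ,
          Finset.card_insert_of_notMem (by simp [Ne.symm b.2]), Finset.card_singleton]
      omega
    rw [Finset.sum_congr rfl fun b _ => hb b, Finset.sum_const, Finset.card_univ, smul_eq_mul]
    have hcb : Fintype.card {b : α // b ≠ a} = 2 * n + 1 := by
      rw [Fintype.card_subtype, Finset.filter_ne', Finset.card_erase_of_mem (Finset.mem_univ a),
        Finset.card_univ]
      omega
    rw [hcb]
    have h1 : 2 * (n + 1) - 1 = 2 * n + 1 := by omega
    rw [h1, Nat.doubleFactorial_add_one]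

lemma card_even_support (Q : Type) [Fintype Q] [DecidableEq Q] (m : ℕ)
    (hm : Fintype.card Q = m) (h1 : 1 ≤ m) :
    Fintype.card {g : Q → Bool // Even (univ.filter fun q => g q = true).card}
      = 2 ^ (m - 1) := by
  have hpos : 0 < Fintype.card Q := by omega
  obtain ⟨q0⟩ := Fintype.card_pos_iff.mp hpos
  have hsplit : ∀ g : Q → Bool, (univ.filter fun q => g q = true).card
      = (univ.filter fun q' : {q : Q // q ≠ q0} => g q'.1 = true).card
        + (if g q0 = true then 1 else 0) := by
    intro g
    rw [Finset.card_filter, Finset.card_filter,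
      ← Finset.sum_erase_add _ _ (Finset.mem_univ q0)]
    congr 1
    exact Finset.sum_subtype _ (fun q => by simp [Finset.mem_erase]) _
  have E : {g : Q → Bool // Even (univ.filter fun q => g q = true).card}
      ≃ ({q : Q // q ≠ q0} → Bool) := by
    refine ⟨fun g q' => g.1 q'.1,
      fun h => ⟨fun q => if hq : q = q0
        then !decide (Even (univ.filter fun q' : {q : Q // q ≠ q0} => h q' = true).card)
        else h ⟨q, hq⟩, ?_⟩, ?_, ?_⟩
    · rw [hsplit]
      have hres : (univ.filter fun q' : {q : Q // q ≠ q0} =>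
          (if hq : q'.1 = q0 then !decide (Even (univ.filter
            fun q' : {q : Q // q ≠ q0} => h q' = true).card) else h ⟨q'.1, hq⟩) = true)
          = univ.filter fun q' : {q : Q // q ≠ q0} => h q' = true := by
        apply Finset.filter_congr
        intro q' _
        rw [dif_neg q'.2]
      rw [hres, dif_pos rfl]
      set N := (univ.filter fun q' : {q : Q // q ≠ q0} => h q' = true).card with hN
      by_cases he : Even N
      · simp [he]
      · have hd : (!decide (Even N)) = true := by simp [he]
        rw [hd, if_pos rfl]
        exact Nat.even_add_one.mpr he
    · rintro ⟨g, hg⟩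
      apply Subtype.ext
      funext q
      show (if hq : q = q0
          then !decide (Even (univ.filter
            fun q' : {q : Q // q ≠ q0} => g q'.1 = true).card)
          else g q) = g q
      by_cases hq : q = q0
      · rw [dif_pos hq, hq]
        rw [hsplit g] at hg
        cases hgq : g q0
        · rw [hgq] at hg
          simp at hg
          simp [hg]
        · rw [hgq] at hg
          simp [Nat.even_add_one] at hg
          simp [hg]
      · simp only [dif_neg hq]
    · intro h
      funext q'
      show (if hq : q'.1 = q0
          then !decide (Even (univ.filter
            fun q'' : {q : Q // q ≠ q0} => h q'' = true).card)
          else h ⟨q'.1, hq⟩) = h q'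
      simp only [dif_neg q'.2]
  rw [Fintype.card_congr E, Fintype.card_fun, Fintype.card_bool]
  congr 1
  rw [Fintype.card_subtype, Finset.filter_ne', Finset.card_erase_of_mem (Finset.mem_univ q0),
    Finset.card_univ, hm]

variable {α : Type} [Fintype α] [DecidableEq α]

/-- The setoid whose classes are the blocks of an fpf involution. -/
def blockSetoid (σ : FPF α) : Setoid α where
  r x y := y = x ∨ y = σ.1 x
  iseqv := by
    refine ⟨fun x => Or.inl rfl, ?_, ?_⟩
    · rintro x y (rfl | rfl)
      · exact Or.inl rfl
      · exact Or.inr (σ.2.1 x).symm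
    · rintro x y z (rfl | rfl) h
      · exact h
      · rcases h with rfl | rfl
        · exact Or.inr rfl
        · exact Or.inl (σ.2.1 x)

instance (σ : FPF α) : DecidableRel (blockSetoid σ).r := fun _ _ => instDecidableOr

instance (σ : FPF α) : DecidableEq (Quotient (blockSetoid σ)) :=
  fun q q' => Quotient.recOnSubsingleton₂ q q' fun x y =>
    decidable_of_iff _ (Quotient.eq (r := blockSetoid σ)).symm

instance (σ : FPF α) : Fintype (Quotient (blockSetoid σ)) :=
  Fintype.ofSurjective (Quotient.mk (blockSetoid σ)) Quotient.mk_surjective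

lemma blockFiber_card (σ : FPF α) (q : Quotient (blockSetoid σ)) :
    (univ.filter fun x : α => Quotient.mk (blockSetoid σ) x = q).card = 2 := by
  induction q using Quotient.ind with
  | _ a =>
  have hmem : (univ.filter fun x : α => Quotient.mk (blockSetoid σ) x
      = Quotient.mk (blockSetoid σ) a) = {a, σ.1 a} := by
    ext x
    simp only [Finset.mem_filter, Finset.mem_univ, true_and, Finset.mem_insert,
      Finset.mem_singleton, Quotient.eq]
    show (a = x ∨ a = σ.1 x) ↔ _
    constructor
    · rintro (rfl | h)
      · exact Or.inl rfl
      · exact Or.inr (by rw [h, σ.2.1])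
    · rintro (rfl | rfl)
      · exact Or.inl rfl
      · exact Or.inr (σ.2.1 a).symm
  rw [hmem, Finset.card_insert_of_notMem (by simp [Ne.symm (σ.2.2 a)]),
    Finset.card_singleton]

lemma card_blockQuotient (σ : FPF α) (n : ℕ) (h : Fintype.card α = 2 * n) :
    Fintype.card (Quotient (blockSetoid σ)) = n := by
  have := Finset.card_eq_sum_card_fiberwise
    (f := Quotient.mk (blockSetoid σ)) (s := univ) (t := univ) (fun x _ => Finset.mem_univ _)
  simp only [Finset.card_univ, h] at this
  have h2 : ∀ q ∈ (univ : Finset (Quotient (blockSetoid σ))),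
      (univ.filter fun x : α => Quotient.mk (blockSetoid σ) x = q).card = 2 :=
    fun q _ => blockFiber_card σ q
  rw [Finset.sum_congr rfl h2, Finset.sum_const, Finset.card_univ, smul_eq_mul, mul_comm] at this
  omega

lemma lift_filter_card (σ : FPF α) (g : Quotient (blockSetoid σ) → Bool) :
    (univ.filter fun x : α => g (Quotient.mk (blockSetoid σ) x) = true).card
      = 2 * (univ.filter fun q => g q = true).card := by
  rw [Finset.card_eq_sum_card_fiberwise
    (f := Quotient.mk (blockSetoid σ)) (t := univ.filter fun q => g q = true)
    (fun x hx => by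
      simp only [Finset.mem_coe, Finset.mem_filter, Finset.mem_univ, true_and] at hx ⊢
      exact hx)]
  have : ∀ q ∈ univ.filter fun q => g q = true,
      ((univ.filter fun x : α => g (Quotient.mk (blockSetoid σ) x) = true).filter
        fun x => Quotient.mk (blockSetoid σ) x = q).card = 2 := by
    intro q hq
    simp only [Finset.mem_filter, Finset.mem_univ, true_and] at hq
    rw [Finset.filter_filter]
    have : (univ.filter fun x : α =>
        g (Quotient.mk (blockSetoid σ) x) = true ∧ Quotient.mk (blockSetoid σ) x = q)
        = univ.filter fun x : α => Quotient.mk (blockSetoid σ) x = q := by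
      apply Finset.filter_congr
      intro x _
      constructor
      · exact fun h => h.2
      · exact fun h => ⟨by rw [h, hq], h⟩
    rw [this, blockFiber_card]
  rw [Finset.sum_congr rfl this, Finset.sum_const, smul_eq_mul, mul_comm]

lemma card_dec (σ : FPF α) (n : ℕ) (h : Fintype.card α = 2 * n) (hn : 1 ≤ n) :
    Fintype.card {d : α → Bool // (∀ x, d (σ.1 x) = d x)
      ∧ 4 ∣ (univ.filter fun x => d x = true).card} = 2 ^ (n - 1) := by
  have hlift : ∀ d : {d : α → Bool // (∀ x, d (σ.1 x) = d x)
      ∧ 4 ∣ (univ.filter fun x => d x = true).card},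
      ∀ x y : α, (blockSetoid σ).r x y → d.1 x = d.1 y := by
    rintro d x y (rfl | rfl)
    · rfl
    · exact (d.2.1 x).symm
  have E : {d : α → Bool // (∀ x, d (σ.1 x) = d x)
        ∧ 4 ∣ (univ.filter fun x => d x = true).card}
      ≃ {g : Quotient (blockSetoid σ) → Bool //
          Even (univ.filter fun q => g q = true).card} := by
    refine ⟨fun d => ⟨Quotient.lift d.1 (hlift d), ?_⟩,
      fun g => ⟨fun x => g.1 (Quotient.mk (blockSetoid σ) x), ?_, ?_⟩, ?_, ?_⟩
    · -- evenness of the lifted function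
      have hd := d.2.2
      have hcount := lift_filter_card σ (Quotient.lift d.1 (hlift d))
      have : (univ.filter fun x : α =>
          Quotient.lift d.1 (hlift d) (Quotient.mk (blockSetoid σ) x) = true)
          = univ.filter fun x => d.1 x = true := rfl
      rw [this] at hcount
      rw [hcount] at hd
      obtain ⟨k, hk⟩ := hd
      exact ⟨k, by omega⟩
    · intro x
      have hq : Quotient.mk (blockSetoid σ) (σ.1 x) = Quotient.mk (blockSetoid σ) x :=
        Quotient.sound (Or.inr (σ.2.1 x).symm)
      show g.1 (Quotient.mk (blockSetoid σ) (σ.1 x)) = g.1 (Quotient.mk (blockSetoid σ) x)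
      rw [hq]
    · have hcount := lift_filter_card σ g.1
      have hg := g.2
      rw [hcount]
      obtain ⟨k, hk⟩ := hg
      exact ⟨k, by omega⟩
    · intro d
      apply Subtype.ext
      funext x
      rfl
    · intro g
      apply Subtype.ext
      funext q
      induction q using Quotient.ind with
      | _ a => rfl
  rw [Fintype.card_congr E]
  exact card_even_support _ n (card_blockQuotient σ n h) hn

/-- A permutation gives a horizontal-free connector. -/
def permToFPF (n : ℕ) (π : Equiv.Perm (Fin n)) :
    {σ : FPF (Fin n ⊕ Fin n) // ∀ x, (σ.1 x).isLeft ≠ x.isLeft} := by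
  refine ⟨⟨(Equiv.sumCongr π π.symm).trans (Equiv.sumComm _ _), ?_, ?_⟩, ?_⟩
  · rintro (i | j) <;> simp
  · rintro (i | j) <;> simp
  · rintro (i | j) <;> simp

lemma permToFPF_injective (n : ℕ) : Function.Injective (permToFPF n) := by
  intro π π' h
  have h' : ((Equiv.sumCongr π π.symm).trans (Equiv.sumComm _ _))
      = ((Equiv.sumCongr π' π'.symm).trans (Equiv.sumComm _ _)) :=
    congrArg Subtype.val (congrArg Subtype.val h)
  apply Equiv.ext
  intro i
  have := congrFun (congrArg DFunLike.coe h') (Sum.inl i)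
  simpa using this

lemma permToFPF_surjective (n : ℕ) : Function.Surjective (permToFPF n) := by
  rintro ⟨σ, hσ⟩
  have hL : ∀ i : Fin n, ∃ j, σ.1 (Sum.inl i) = Sum.inr j := by
    intro i
    cases h : σ.1 (Sum.inl i) with
    | inl k => exact absurd (by rw [h]; rfl) (hσ (Sum.inl i))
    | inr j => exact ⟨j, rfl⟩
  have hR : ∀ j : Fin n, ∃ i, σ.1 (Sum.inr j) = Sum.inl i := by
    intro j
    cases h : σ.1 (Sum.inr j) with
    | inl i => exact ⟨i, rfl⟩
    | inr k => exact absurd (by rw [h]; rfl) (hσ (Sum.inr j))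
  choose f hf using hL
  choose g hg using hR
  have hgf : ∀ i, g (f i) = i := by
    intro i
    have := σ.2.1 (Sum.inl i)
    rw [hf i, hg (f i)] at this
    exact Sum.inl.inj this
  have hfg : ∀ j, f (g j) = j := by
    intro j
    have := σ.2.1 (Sum.inr j)
    rw [hg j, hf (g j)] at this
    exact Sum.inr.inj this
  refine ⟨⟨f, g, hgf, hfg⟩, ?_⟩
  apply Subtype.ext
  apply Subtype.ext
  ext x
  cases x with
  | inl i => simpa [permToFPF] using (hf i).symm
  | inr j => simpa [permToFPF] using (hg j).symm

lemma card_horizFree (n : ℕ) :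
    Fintype.card {σ : FPF (Fin n ⊕ Fin n) // ∀ x, (σ.1 x).isLeft ≠ x.isLeft}
      = Nat.factorial n := by
  rw [← Fintype.card_congr (Equiv.ofBijective _
    ⟨permToFPF_injective n, permToFPF_surjective n⟩), Fintype.card_perm, Fintype.card_fin]

/-- A decorated `n`-connector: a fixed-point-free involution `conn` of the `2n`-point
set (top points `Sum.inl i`, bottom points `Sum.inr i`) — i.e. an `n`-connector —
together with a decoration `dec` of its blocks (a Boolean function constant on the
blocks `{x, conn x}`), such that the number of decorated blocks is even.  Since every
block has exactly two points, the number of decorated blocks is even if and only if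
the number of decorated points is divisible by `4`. -/
structure DecConnector (n : ℕ) where
  conn : Equiv.Perm (Fin n ⊕ Fin n)
  invol : ∀ x, conn (conn x) = x
  fpf : ∀ x, conn x ≠ x
  dec : Fin n ⊕ Fin n → Bool
  dec_block : ∀ x, dec (conn x) = dec x
  even_blocks : 4 ∣ (Finset.univ.filter fun x => dec x = true).card

set_option maxHeartbeats 1000000 in
/-- For every `n ≥ 1` the number of decorated `n`-connectors whose
underlying partition has at least one horizontal block (a block `{x, conn x}` with
both points on the same side) is `|T_n^=| = 2^(n-1) · ((2n-1)!! − n!)`. -/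
theorem card_decConnectors_withHorizontal (n : ℕ) (hn : 1 ≤ n) :
    Nat.card {c : DecConnector n // ∃ x, (c.conn x).isLeft = x.isLeft} =
      2 ^ (n - 1) * (Nat.doubleFactorial (2 * n - 1) - Nat.factorial n) := by
  have E : {c : DecConnector n // ∃ x, (c.conn x).isLeft = x.isLeft}
      ≃ Σ σ : {σ : FPF (Fin n ⊕ Fin n) // ∃ x, (σ.1 x).isLeft = x.isLeft},
          {d : Fin n ⊕ Fin n → Bool // (∀ x, d (σ.1.1 x) = d x)
            ∧ 4 ∣ (univ.filter fun x => d x = true).card} :=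
    { toFun := fun c => ⟨⟨⟨c.1.conn, c.1.invol, c.1.fpf⟩, c.2⟩,
        ⟨c.1.dec, c.1.dec_block, c.1.even_blocks⟩⟩
      invFun := fun s => ⟨⟨s.1.1.1, s.1.1.2.1, s.1.1.2.2, s.2.1, s.2.2.1, s.2.2.2⟩, s.1.2⟩
      left_inv := fun c => rfl
      right_inv := fun s => rfl }
  rw [Nat.card_congr E, Nat.card_eq_fintype_card, Fintype.card_sigma]
  have hcard : Fintype.card (Fin n ⊕ Fin n) = 2 * n := by simp [two_mul]
  have hfib : ∀ σ : {σ : FPF (Fin n ⊕ Fin n) // ∃ x, (σ.1 x).isLeft = x.isLeft},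
      Fintype.card {d : Fin n ⊕ Fin n → Bool // (∀ x, d (σ.1.1 x) = d x)
        ∧ 4 ∣ (univ.filter fun x => d x = true).card} = 2 ^ (n - 1) :=
    fun σ => card_dec σ.1 n hcard hn
  rw [Finset.sum_congr rfl fun σ _ => hfib σ, Finset.sum_const, Finset.card_univ, smul_eq_mul]
  have h1 : Fintype.card {σ : FPF (Fin n ⊕ Fin n) //
      ¬ ∃ x, (σ.1 x).isLeft = x.isLeft} = Nat.factorial n := by
    rw [← card_horizFree n]
    exact Fintype.card_congr (Equiv.subtypeEquivRight fun σ => not_exists)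
  have h2 := Fintype.card_subtype_compl
    (fun σ : FPF (Fin n ⊕ Fin n) => ∃ x, (σ.1 x).isLeft = x.isLeft)
  have h3 := Fintype.card_subtype_le
    (fun σ : FPF (Fin n ⊕ Fin n) => ∃ x, (σ.1 x).isLeft = x.isLeft)
  have h4 := card_fpf n (Fin n ⊕ Fin n) hcard
  have hc : Fintype.card {σ : FPF (Fin n ⊕ Fin n) // ∃ x, (σ.1 x).isLeft = x.isLeft}
      = Nat.doubleFactorial (2 * n - 1) - Nat.factorial n := by omega
  rw [hc, mul_comm]
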